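/- Let T ≥ 1 be a natural number and define sizes s : ℕ → ℕ by s(1) = 2^(T−1) and s(i) = 3·2^(T−i) for 2 ≤ i ≤ T. Then for every t with 1 ≤ t ≤ T, the only subset S ⊆ {1,…,t} with ∑_{i∈S} s(i) = 2^T − 2^(T−t) is the set { i ∈ {1,…,t} : i ≡ t (mod 2) }. -/

import Mathlib

lemma subsetsum_aux (T : ℕ) (hT : 1 ≤ T) (s : ℕ → ℕ)
    (hs1 : s 1 = 2 ^ (T - 1))
    (hsi : ∀ i, 2 ≤ i → i ≤ T → s i = 3 * 2 ^ (T - i)) :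
    ∀ t, t ≤ T → ∀ S ⊆ Finset.Icc 1 t,
      ((∑ i ∈ S, s i) = 2 ^ T - 2 ^ (T - t) ↔
        S = (Finset.Icc 1 t).filter (fun i => i % 2 = t % 2)) := by
  have hdvd : ∀ m, m ≤ T → ∀ i, 1 ≤ i → i ≤ m → 2 ^ (T - m) ∣ s i := by
    intro m hm i h1 h2
    rcases eq_or_lt_of_le h1 with h | h
    · rw [← h, hs1]
      exact pow_dvd_pow 2 (by omega)
    · rw [hsi i (by omega) (by omega)]
      exact Dvd.dvd.mul_left (pow_dvd_pow 2 (by omega)) 3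
  intro t
  induction t using Nat.strong_induction_on with
  | _ t IH =>
    intro htT S hS
    rcases Nat.eq_zero_or_pos t with rfl | ht1
    · rw [show Finset.Icc 1 0 = (∅ : Finset ℕ) from rfl] at hS ⊢
      rw [Finset.subset_empty] at hS
      subst hS
      simp
    · -- main case: 1 ≤ t ≤ T
      have hd : 0 < 2 ^ (T - t) := pow_pos (by norm_num) _
      have hdle : 2 ^ (T - t) ≤ 2 ^ T := Nat.pow_le_pow_right (by norm_num) (by omega)
      have h2d : 2 ^ (T - (t - 1)) = 2 * 2 ^ (T - t) := by
        rw [show T - (t - 1) = (T - t) + 1 from by omega, pow_succ]; ring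
      have h2dT : 2 ^ (T - (t - 1)) ∣ 2 ^ T := pow_dvd_pow 2 (by omega)
      -- the ext identity used in both directions
      have hins : (Finset.Icc 1 t).filter (fun i => i % 2 = t % 2) =
          insert t ((Finset.Icc 1 (t - 2)).filter (fun i => i % 2 = (t - 2) % 2)) := by
        ext i
        simp only [Finset.mem_filter, Finset.mem_Icc, Finset.mem_insert]
        omega
      constructor
      · intro hsum
        have hsum' : (∑ i ∈ S, s i) + 2 ^ (T - t) = 2 ^ T := by omega
        -- Step A : t ∈ S
        have htS : t ∈ S := by
          by_contra htS
          have hdv : 2 ^ (T - (t - 1)) ∣ ∑ i ∈ S, s i := by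
            refine Finset.dvd_sum fun i hi => ?_
            have hmem := Finset.mem_Icc.mp (hS hi)
            have hne : i ≠ t := fun h => htS (h ▸ hi)
            exact hdvd (t - 1) (by omega) i (by omega) (by omega)
          have hsub : 2 ^ (T - (t - 1)) ∣ 2 ^ T - ∑ i ∈ S, s i := Nat.dvd_sub h2dT hdv
          have heq : 2 ^ T - ∑ i ∈ S, s i = 2 ^ (T - t) := by omega
          rw [heq] at hsub
          have := Nat.le_of_dvd hd hsub
          omega
        set S' := S.erase t with hS'def
        have hsumS' : (∑ i ∈ S'.erase t, s i) = ∑ i ∈ S', s i := by rw [Finset.erase_idem]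
        have hS't : (∑ i ∈ S', s i) + s t = ∑ i ∈ S, s i := Finset.sum_erase_add S s htS
        -- Step B : t - 1 ∉ S'
        have hB : t - 1 ∉ S' := by
          by_contra hB
          have ht2 : 2 ≤ t := by
            have := Finset.mem_Icc.mp (hS (Finset.erase_subset _ _ hB))
            omega
          have hst : s t = 3 * 2 ^ (T - t) := hsi t ht2 htT
          have h4d : 2 ^ (T - (t - 2)) = 4 * 2 ^ (T - t) := by
            rw [show T - (t - 2) = (T - t) + 2 from by omega, pow_add]; ring
          have h4dT : 2 ^ (T - (t - 2)) ∣ 2 ^ T := pow_dvd_pow 2 (by omega)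
          set S'' := S'.erase (t - 1) with hS''def
          have hdv : 2 ^ (T - (t - 2)) ∣ ∑ i ∈ S'', s i := by
            refine Finset.dvd_sum fun i hi => ?_
            have hi1 : i ≠ t - 1 := (Finset.mem_erase.mp hi).1
            have hi2 : i ∈ S' := (Finset.mem_erase.mp hi).2
            have hi3 : i ≠ t := (Finset.mem_erase.mp hi2).1
            have hmem := Finset.mem_Icc.mp (hS (Finset.erase_subset _ _ hi2))
            exact hdvd (t - 2) (by omega) i (by omega) (by omega)
          have hsum'' : (∑ i ∈ S'', s i) + s (t - 1) = ∑ i ∈ S', s i :=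
            Finset.sum_erase_add S' s hB
          -- s (t-1) = 2*d or 6*d
          have hu : s (t - 1) = 2 * 2 ^ (T - t) ∨ s (t - 1) = 6 * 2 ^ (T - t) := by
            rcases eq_or_lt_of_le ht2 with h | h
            · left
              rw [show t - 1 = 1 from by omega, hs1,
                show T - 1 = (T - t) + 1 from by omega, pow_succ]
              ring
            · right
              rw [hsi (t - 1) (by omega) (by omega),
                show T - (t - 1) = (T - t) + 1 from by omega, pow_succ]
              ring
          -- 4d ∣ s (t-1) + 4d
          have hkey : 2 ^ (T - (t - 2)) ∣ 2 ^ T - ∑ i ∈ S'', s i := Nat.dvd_sub h4dT hdv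
          have heq : 2 ^ T - ∑ i ∈ S'', s i = s (t - 1) + 4 * 2 ^ (T - t) := by
            rcases hu with h | h <;> omega
          rw [heq, h4d] at hkey
          have hkey2 : 4 * 2 ^ (T - t) ∣ s (t - 1) :=
            (Nat.dvd_add_right (dvd_refl _)).mp (by rwa [Nat.add_comm] at hkey)
          rcases hu with h | h
          · rw [h] at hkey2
            have := Nat.le_of_dvd (by omega) hkey2
            omega
          · rw [h] at hkey2
            have hkey3 : 4 * 2 ^ (T - t) ∣ 6 * 2 ^ (T - t) - 4 * 2 ^ (T - t) :=
              Nat.dvd_sub hkey2 (dvd_refl _)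
            rw [show 6 * 2 ^ (T - t) - 4 * 2 ^ (T - t) = 2 * 2 ^ (T - t) from by omega] at hkey3
            have := Nat.le_of_dvd (by omega) hkey3
            omega
        -- Step C : S' ⊆ Icc 1 (t-2) and its sum
        have hC : S' ⊆ Finset.Icc 1 (t - 2) := by
          intro i hi
          have hi1 : i ≠ t := (Finset.mem_erase.mp hi).1
          have hi2 : i ∈ S := (Finset.mem_erase.mp hi).2
          have hi3 : i ≠ t - 1 := fun h => hB (h ▸ hi)
          have hmem := Finset.mem_Icc.mp (hS hi2)
          rw [Finset.mem_Icc]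
          omega
        have hsum3 : (∑ i ∈ S', s i) = 2 ^ T - 2 ^ (T - (t - 2)) := by
          rcases eq_or_lt_of_le (show 1 ≤ t from ht1) with h | h
          · -- t = 1
            have ht1' : t = 1 := h.symm
            subst ht1'
            have hst : s 1 = 2 ^ (T - 1) := hs1
            have h2T : 2 ^ T = 2 * 2 ^ (T - 1) := by
              have hps := pow_succ 2 (T - 1)
              rw [show T - 1 + 1 = T from by omega] at hps
              omega
            simp only [show (1 : ℕ) - 2 = 0 from rfl, Nat.sub_zero] at *
            omega
          · -- t ≥ 2
            have hst : s t = 3 * 2 ^ (T - t) := hsi t (by omega) htT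
            have h4d : 2 ^ (T - (t - 2)) = 4 * 2 ^ (T - t) := by
              rw [show T - (t - 2) = (T - t) + 2 from by omega, pow_add]; ring
            have h4dle : 2 ^ (T - (t - 2)) ≤ 2 ^ T := Nat.pow_le_pow_right (by norm_num) (by omega)
            omega
        have hfil : S' = (Finset.Icc 1 (t - 2)).filter (fun i => i % 2 = (t - 2) % 2) :=
          (IH (t - 2) (by omega) (by omega) S' hC).mp hsum3
        rw [hins, ← hfil, hS'def, Finset.insert_erase htS]
      · intro hfil
        have hFsub : (Finset.Icc 1 (t - 2)).filter (fun i => i % 2 = (t - 2) % 2) ⊆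
            Finset.Icc 1 (t - 2) := Finset.filter_subset _ _
        have hFsum : (∑ i ∈ (Finset.Icc 1 (t - 2)).filter (fun i => i % 2 = (t - 2) % 2), s i)
            = 2 ^ T - 2 ^ (T - (t - 2)) :=
          (IH (t - 2) (by omega) (by omega) _ hFsub).mpr rfl
        have htnot : t ∉ (Finset.Icc 1 (t - 2)).filter (fun i => i % 2 = (t - 2) % 2) := by
          intro h
          have := Finset.mem_Icc.mp (hFsub h)
          omega
        rw [hfil, hins, Finset.sum_insert htnot, hFsum]
        rcases eq_or_lt_of_le (show 1 ≤ t from ht1) with h | h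
        · -- t = 1
          have ht1' : t = 1 := h.symm
          subst ht1'
          have hst : s 1 = 2 ^ (T - 1) := hs1
          have h2T : 2 ^ T = 2 * 2 ^ (T - 1) := by
            have hps := pow_succ 2 (T - 1)
            rw [show T - 1 + 1 = T from by omega] at hps
            omega
          simp only [show (1 : ℕ) - 2 = 0 from rfl, Nat.sub_zero] at *
          omega
        · -- t ≥ 2
          have hst : s t = 3 * 2 ^ (T - t) := hsi t (by omega) htT
          have h4d : 2 ^ (T - (t - 2)) = 4 * 2 ^ (T - t) := by
            rw [show T - (t - 2) = (T - t) + 2 from by omega, pow_add]; ring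
          have h4dle : 2 ^ (T - (t - 2)) ≤ 2 ^ T := Nat.pow_le_pow_right (by norm_num) (by omega)
          omega

theorem stmt_10 (T : ℕ) (hT : 1 ≤ T) (s : ℕ → ℕ)
    (hs1 : s 1 = 2 ^ (T - 1))
    (hsi : ∀ i, 2 ≤ i → i ≤ T → s i = 3 * 2 ^ (T - i)) :
    ∀ t, 1 ≤ t → t ≤ T → ∀ S ⊆ Finset.Icc 1 t,
      ((∑ i ∈ S, s i) = 2 ^ T - 2 ^ (T - t) ↔
        S = (Finset.Icc 1 t).filter (fun i => i % 2 = t % 2)) := by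
  intro t _ htT
  exact subsetsum_aux T hT s hs1 hsi t htT
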